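/- arXiv:1508.06979 — 2 statements merged into one kernel-verified Lean document; each statement's English description precedes it below -/
import Mathlib

section
/- Let (v,x) ∈ V × N with normal basis v_{i,j} of type (α;β), and suppose α_l = α_{l+1} for some l < ℓ(α). Let V_2 be the span of {v_{l,j} : all j} and let V_1 be the span of all v_{i,j} with i ≠ l, l+1 together with the vectors v_{l,j} + v_{l+1,j} for 1 ≤ j ≤ α_{l+1} + β_{l+1}. Then V = V_1 ⊕ V_2, both V_1 and V_2 are nonzero, both are x-stable, and v ∈ V_1. -/
/-- For a normal basis `b ⟨i,j⟩` of `(v,x)` of type `(α;β)` with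
`α l = α (l+1)` (two equal nonzero parts of `α`, rows 0-indexed `l`, `l+1 < k`),
let `V₂` be the span of row `l` and `V₁` the span of the rows `i ≠ l, l+1`
together with the vectors `b ⟨l,j⟩ + b ⟨l+1,j⟩` for `j < α (l+1) + β (l+1)`.
Then `V = V₁ ⊕ V₂`, both summands are nonzero and `x`-stable, and `v ∈ V₁`. -/
theorem decomposition_when_alpha_parts_equal
    (F : Type) [Field F] (V : Type) [AddCommGroup V] [Module F V] [FiniteDimensional F V]
    (k : ℕ) (α β : ℕ → ℕ) (hα : Antitone α) (hβ : Antitone β)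
    (hrow : ∀ i : Fin k, 0 < α i + β i)
    (b : Module.Basis (Σ i : Fin k, Fin (α i + β i)) F V)
    (x : Module.End F V)
    (hx : ∀ p : Σ i : Fin k, Fin (α i + β i), x (b p) =
      if _ : (p.2 : ℕ) = 0 then 0
      else b ⟨p.1, ⟨(p.2 : ℕ) - 1, lt_of_le_of_lt (Nat.sub_le _ _) p.2.2⟩⟩)
    (v : V)
    (hv : v = ∑ i : Fin k,
      if h : 0 < α i then b ⟨i, ⟨α i - 1, by omega⟩⟩ else 0)
    (l : ℕ) (hl : l + 1 < k) (heq : α l = α (l + 1)) (hne : 0 < α (l + 1))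
    (V₁ V₂ : Submodule F V)
    (hV₁ : V₁ = Submodule.span F
      ({w : V | ∃ p : Σ i : Fin k, Fin (α i + β i),
          w = b p ∧ (p.1 : ℕ) ≠ l ∧ (p.1 : ℕ) ≠ l + 1}
        ∪ {w : V | ∃ j : Fin (α (l + 1) + β (l + 1)),
          w = b ⟨⟨l, by omega⟩, ⟨(j : ℕ), lt_of_lt_of_le j.2
              (Nat.add_le_add (hα (Nat.le_succ l)) (hβ (Nat.le_succ l)))⟩⟩
            + b ⟨⟨l + 1, hl⟩, j⟩}))
    (hV₂ : V₂ = Submodule.span F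
      (Set.range fun j : Fin (α l + β l) => b ⟨⟨l, by omega⟩, j⟩)) :
    IsCompl V₁ V₂ ∧ V₁ ≠ ⊥ ∧ V₂ ≠ ⊥
    ∧ (∀ w ∈ V₁, x w ∈ V₁) ∧ (∀ w ∈ V₂, x w ∈ V₂) ∧ v ∈ V₁ := by
  classical
  have hvmk : ∀ (n m : ℕ) (h : m < n), ((⟨m, h⟩ : Fin n) : ℕ) = m := fun _ _ _ => rfl
  have hαβ : α (l + 1) + β (l + 1) ≤ α l + β l :=
    Nat.add_le_add (hα (Nat.le_succ l)) (hβ (Nat.le_succ l))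
  have hlk : l < k := by omega
  have h0 : 0 < α l + β l := hrow ⟨l, hlk⟩
  set q : (Σ i : Fin k, Fin (α i + β i)) → (Σ i : Fin k, Fin (α i + β i)) :=
    fun p => ⟨⟨l, hlk⟩, ⟨min (p.2 : ℕ) (α l + β l - 1),
      Nat.lt_of_le_of_lt (Nat.min_le_right _ _) (Nat.sub_lt h0 one_pos)⟩⟩ with hqdef
  have hql : ∀ p, ((q p).1 : ℕ) = l := fun p => rfl
  set c : (Σ i : Fin k, Fin (α i + β i)) → V :=
    fun p => if (p.1 : ℕ) = l + 1 then b p + b (q p) else b p with hcdef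
  set c' : (Σ i : Fin k, Fin (α i + β i)) → V :=
    fun p => if (p.1 : ℕ) = l + 1 then b p - b (q p) else b p with hc'def
  have hcomp1 : (b.constr F c).comp (b.constr F c') = LinearMap.id := by
    apply b.ext
    intro p
    simp only [LinearMap.comp_apply, LinearMap.id_apply, Module.Basis.constr_basis]
    by_cases hp : (p.1 : ℕ) = l + 1
    · have hqp : ¬ ((q p).1 : ℕ) = l + 1 := by rw [hql]; omega
      simp only [hcdef, hc'def, if_pos hp, if_neg hqp, map_sub, Module.Basis.constr_basis]
      abel
    · simp only [hcdef, hc'def, if_neg hp, Module.Basis.constr_basis]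
  have hcomp2 : (b.constr F c').comp (b.constr F c) = LinearMap.id := by
    apply b.ext
    intro p
    simp only [LinearMap.comp_apply, LinearMap.id_apply, Module.Basis.constr_basis]
    by_cases hp : (p.1 : ℕ) = l + 1
    · have hqp : ¬ ((q p).1 : ℕ) = l + 1 := by rw [hql]; omega
      simp only [hcdef, hc'def, if_pos hp, if_neg hqp, map_add, Module.Basis.constr_basis]
      abel
    · simp only [hcdef, hc'def, if_neg hp, Module.Basis.constr_basis]
  set e : V ≃ₗ[F] V := LinearEquiv.ofLinear (b.constr F c) (b.constr F c') hcomp1 hcomp2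
    with hedef
  set B : Module.Basis (Σ i : Fin k, Fin (α i + β i)) F V := b.map e with hBdef
  have hB : ∀ p, B p = c p := fun p => by
    simp only [hBdef, Module.Basis.map_apply, hedef, LinearEquiv.ofLinear_apply, Module.Basis.constr_basis]
  have hset2 : (Set.range fun j : Fin (α l + β l) => b ⟨⟨l, hlk⟩, j⟩)
      = B '' {p : Σ i : Fin k, Fin (α i + β i) | (p.1 : ℕ) = l} := by
    ext w
    constructor
    · rintro ⟨j, rfl⟩
      refine ⟨⟨⟨l, hlk⟩, j⟩, rfl, ?_⟩
      rw [hB]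
      simp only [hcdef, hvmk]
      rw [if_neg (by omega)]
    · rintro ⟨⟨⟨iv, hik⟩, j⟩, hp, rfl⟩
      simp only [Set.mem_setOf_eq, hvmk] at hp
      subst hp
      rw [hB]
      simp only [hcdef, hvmk]
      rw [if_neg (by omega)]
      exact ⟨j, rfl⟩
  have hset1 : ({w : V | ∃ p : Σ i : Fin k, Fin (α i + β i),
          w = b p ∧ (p.1 : ℕ) ≠ l ∧ (p.1 : ℕ) ≠ l + 1}
        ∪ {w : V | ∃ j : Fin (α (l + 1) + β (l + 1)),
          w = b ⟨⟨l, by omega⟩, ⟨(j : ℕ), lt_of_lt_of_le j.2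
              (Nat.add_le_add (hα (Nat.le_succ l)) (hβ (Nat.le_succ l)))⟩⟩
            + b ⟨⟨l + 1, hl⟩, j⟩})
      = B '' {p : Σ i : Fin k, Fin (α i + β i) | (p.1 : ℕ) ≠ l} := by
    ext w
    constructor
    · rintro (⟨p, rfl, h1, h2⟩ | ⟨j, rfl⟩)
      · refine ⟨p, h1, ?_⟩
        rw [hB]
        simp only [hcdef]
        rw [if_neg h2]
      · refine ⟨⟨⟨l + 1, hl⟩, j⟩, by simp only [Set.mem_setOf_eq, hvmk]; omega, ?_⟩
        rw [hB]
        simp only [hcdef, hvmk, if_true]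
        have hidx : (q ⟨⟨l + 1, hl⟩, j⟩) = ⟨⟨l, hlk⟩, ⟨(j : ℕ), lt_of_lt_of_le j.2 hαβ⟩⟩ :=
          congrArg (fun t : Fin (α l + β l) => (⟨⟨l, hlk⟩, t⟩ : Σ i : Fin k, Fin (α i + β i)))
            (Fin.ext (by have := j.2; simp only [hvmk]; omega))
        rw [hidx]
        exact add_comm _ _
    · rintro ⟨⟨⟨iv, hik⟩, j⟩, hp, rfl⟩
      simp only [Set.mem_setOf_eq, hvmk] at hp
      by_cases h1 : iv = l + 1
      · subst h1
        right
        rw [hB]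
        simp only [hcdef, hvmk, if_true]
        have hj2 : (j : ℕ) < α (l + 1) + β (l + 1) := j.2
        refine ⟨⟨(j : ℕ), hj2⟩, ?_⟩
        have hidx : (q ⟨⟨l + 1, hik⟩, j⟩) = ⟨⟨l, hlk⟩, ⟨(j : ℕ), lt_of_lt_of_le hj2 hαβ⟩⟩ :=
          congrArg (fun t : Fin (α l + β l) => (⟨⟨l, hlk⟩, t⟩ : Σ i : Fin k, Fin (α i + β i)))
            (Fin.ext (by simp only [hvmk]; omega))
        rw [hidx]
        exact add_comm _ _
      · left
        rw [hB]
        simp only [hcdef, hvmk]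
        rw [if_neg h1]
        exact ⟨⟨⟨iv, hik⟩, j⟩, rfl, hp, h1⟩
  have hV₂' : V₂ = Submodule.span F
      (B '' {p : Σ i : Fin k, Fin (α i + β i) | (p.1 : ℕ) = l}) := by
    rw [hV₂, ← hset2]
  have hV₁' : V₁ = Submodule.span F
      (B '' {p : Σ i : Fin k, Fin (α i + β i) | (p.1 : ℕ) ≠ l}) := by
    rw [hV₁, ← hset1]
  have hcompl : IsCompl V₁ V₂ := by
    constructor
    · rw [hV₁', hV₂']
      exact B.linearIndependent.disjoint_span_image
        (Set.disjoint_left.mpr fun p h1 h2 => h1 h2)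
    · rw [codisjoint_iff, hV₁', hV₂', ← Submodule.span_union, ← Set.image_union]
      have : ({p : Σ i : Fin k, Fin (α i + β i) | (p.1 : ℕ) ≠ l}
          ∪ {p : Σ i : Fin k, Fin (α i + β i) | (p.1 : ℕ) = l}) = Set.univ := by
        ext p; simp [em']
      rw [this, Set.image_univ, Module.Basis.span_eq]
  refine ⟨hcompl, ?_, ?_, ?_, ?_, ?_⟩
  · -- V₁ ≠ ⊥
    rw [Submodule.ne_bot_iff]
    refine ⟨B ⟨⟨l + 1, hl⟩, ⟨0, hrow ⟨l + 1, hl⟩⟩⟩, ?_, B.ne_zero _⟩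
    rw [hV₁']
    exact Submodule.subset_span ⟨_, by simp only [Set.mem_setOf_eq, hvmk]; omega, rfl⟩
  · -- V₂ ≠ ⊥
    rw [Submodule.ne_bot_iff]
    refine ⟨b ⟨⟨l, hlk⟩, ⟨0, hrow ⟨l, hlk⟩⟩⟩, ?_, b.ne_zero _⟩
    rw [hV₂]
    exact Submodule.subset_span ⟨⟨0, h0⟩, rfl⟩
  · -- x-stability of V₁
    intro w hw
    rw [hV₁] at hw ⊢
    suffices h : Submodule.span F
        ({w : V | ∃ p : Σ i : Fin k, Fin (α i + β i),
          w = b p ∧ (p.1 : ℕ) ≠ l ∧ (p.1 : ℕ) ≠ l + 1}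
        ∪ {w : V | ∃ j : Fin (α (l + 1) + β (l + 1)),
          w = b ⟨⟨l, hlk⟩, ⟨(j : ℕ), lt_of_lt_of_le j.2 hαβ⟩⟩
            + b ⟨⟨l + 1, hl⟩, j⟩}) ≤
        Submodule.comap x (Submodule.span F
        ({w : V | ∃ p : Σ i : Fin k, Fin (α i + β i),
          w = b p ∧ (p.1 : ℕ) ≠ l ∧ (p.1 : ℕ) ≠ l + 1}
        ∪ {w : V | ∃ j : Fin (α (l + 1) + β (l + 1)),
          w = b ⟨⟨l, hlk⟩, ⟨(j : ℕ), lt_of_lt_of_le j.2 hαβ⟩⟩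
            + b ⟨⟨l + 1, hl⟩, j⟩})) by
      exact h hw
    refine Submodule.span_le.mpr ?_
    rintro u (⟨p, rfl, h1, h2⟩ | ⟨j, rfl⟩)
    · simp only [SetLike.mem_coe, Submodule.mem_comap]
      rw [hx]
      split_ifs with h
      · exact zero_mem _
      · exact Submodule.subset_span (Or.inl ⟨⟨p.1, ⟨(p.2 : ℕ) - 1,
          lt_of_le_of_lt (Nat.sub_le _ _) p.2.2⟩⟩, rfl, h1, h2⟩)
    · simp only [SetLike.mem_coe, Submodule.mem_comap]
      rw [map_add, hx, hx]
      simp only [hvmk]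
      by_cases hj : (j : ℕ) = 0
      · rw [dif_pos hj, dif_pos hj, add_zero]
        exact zero_mem _
      · rw [dif_neg hj, dif_neg hj]
        refine Submodule.subset_span (Or.inr ⟨⟨(j : ℕ) - 1, by have := j.2; omega⟩, ?_⟩)
        rfl
  · -- x-stability of V₂
    intro w hw
    rw [hV₂] at hw ⊢
    suffices h : Submodule.span F (Set.range fun j : Fin (α l + β l) => b ⟨⟨l, hlk⟩, j⟩) ≤
        Submodule.comap x (Submodule.span F
          (Set.range fun j : Fin (α l + β l) => b ⟨⟨l, hlk⟩, j⟩)) by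
      exact h hw
    refine Submodule.span_le.mpr ?_
    rintro u ⟨j, rfl⟩
    simp only [SetLike.mem_coe, Submodule.mem_comap]
    rw [hx]
    split_ifs with h
    · exact zero_mem _
    · exact Submodule.subset_span ⟨⟨(j : ℕ) - 1,
        lt_of_le_of_lt (Nat.sub_le _ _) j.2⟩, rfl⟩
  · -- v ∈ V₁
    rw [hv, hV₁]
    have hne' : (⟨l, hlk⟩ : Fin k) ≠ ⟨l + 1, hl⟩ := by
      intro h
      have := congrArg Fin.val h
      simp only [hvmk] at this
      omega
    have hfl1mem : (⟨l + 1, hl⟩ : Fin k) ∈ Finset.univ := Finset.mem_univ _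
    have hflmem : (⟨l, hlk⟩ : Fin k) ∈ Finset.univ.erase ⟨l + 1, hl⟩ :=
      Finset.mem_erase.mpr ⟨hne', Finset.mem_univ _⟩
    rw [← Finset.sum_erase_add _ _ hfl1mem, ← Finset.sum_erase_add _ _ hflmem, add_assoc]
    refine add_mem (Submodule.sum_mem _ ?_) ?_
    · intro i hi
      obtain ⟨hifl, hi2⟩ := Finset.mem_erase.mp hi
      obtain ⟨hifl1, -⟩ := Finset.mem_erase.mp hi2
      split_ifs with h
      · exact Submodule.subset_span (Or.inl ⟨_, rfl,
          fun hc => hifl (Fin.ext hc), fun hc => hifl1 (Fin.ext hc)⟩)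
      · exact zero_mem _
    · have hposl : 0 < α ((⟨l, hlk⟩ : Fin k) : ℕ) := by simp only [hvmk]; omega
      have hposl1 : 0 < α ((⟨l + 1, hl⟩ : Fin k) : ℕ) := by simp only [hvmk]; omega
      rw [dif_pos hposl, dif_pos hposl1]
      have hidx : b (⟨⟨l, hlk⟩, ⟨α ((⟨l, hlk⟩ : Fin k) : ℕ) - 1,
              show α l - 1 < α l + β l by omega⟩⟩ : Σ i : Fin k, Fin (α i + β i))
          = b ⟨⟨l, hlk⟩, ⟨α (l + 1) - 1, show α (l + 1) - 1 < α l + β l by omega⟩⟩ :=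
        congrArg (fun t : Fin (α l + β l) => b ⟨⟨l, hlk⟩, t⟩)
          (Fin.ext (show α l - 1 = α (l + 1) - 1 by omega))
      rw [hidx]
      refine Submodule.subset_span (Or.inr ⟨⟨α (l + 1) - 1, by omega⟩, rfl⟩)
end

section
/- Let 0 = W_0 ⊂ W_1 ⊂ … ⊂ W_m = V be a partial flag with x(W_i) ⊆ W_{i−1} and v ∈ W_j, let W = W_1 (so W_1 ⊆ ker x), and let V̄ = V/W with induced nilpotent x̄ and v̄ the image of v (if j ≥ 1). Then the images W̄_i = W_i/W for 2 ≤ i ≤ m form a partial flag in V̄ with x̄(W̄_i) ⊆ W̄_{i−1}, dim W̄_i = dim W_i − dim W_1, and v̄ ∈ W̄_j. Conversely, this construction gives a bijection between partial flags of type ρ through W_1 = W satisfying the conditions and partial flags of the quotient type ρ̄ in V̄ satisfying the corresponding conditions. -/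
/-- Let `x` be nilpotent, `v ∈ V`, `ρ : 0 = r 0 < … < r m = n` a dimension
sequence, `1 ≤ j ≤ m`, and `W ⊆ ker x` a fixed `r 1`-dimensional subspace with induced
endomorphism `x̄` of `V̄ = V/W` and `v̄` the image of `v`.  Sending a flag
`0 = W_0 ⊂ W_1 ⊂ … ⊂ W_m = V` of type `ρ` with `W_1 = W`, `x W_i ⊆ W_{i-1}` and
`v ∈ W_j` to the flag `W̄_i = W_{i+1}/W` gives a bijection onto the set of flags
`0 = Ū_0 ⊂ … ⊂ Ū_{m-1} = V̄` with `dim Ū_i = r (i+1) - r 1`, `x̄ Ū_i ⊆ Ū_{i-1}` and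
`v̄ ∈ Ū_{j-1}`. -/
theorem quotient_flag_bijection
    (F : Type) [Field F] (V : Type) [AddCommGroup V] [Module F V] [FiniteDimensional F V]
    (n : ℕ) (hn : Module.finrank F V = n)
    (x : Module.End F V) (hnil : IsNilpotent x) (v : V)
    (m : ℕ) (hm : 1 ≤ m) (r : ℕ → ℕ) (hr0 : r 0 = 0) (hrm : r m = n)
    (hr : ∀ i, i < m → r i < r (i + 1))
    (j : ℕ) (hj1 : 1 ≤ j) (hjm : j ≤ m)
    (W : Submodule F V) (hWker : W ≤ LinearMap.ker x)
    (hWdim : Module.finrank F W = r 1)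
    (xbar : Module.End F (V ⧸ W))
    (hxbar : ∀ u : V, xbar (Submodule.Quotient.mk u) = Submodule.Quotient.mk (x u)) :
    Set.BijOn (fun (Wc : ℕ → Submodule F V) => fun i : ℕ => Submodule.map W.mkQ (Wc (i + 1)))
      {Wc : ℕ → Submodule F V |
        Wc 0 = ⊥ ∧ (∀ i, m ≤ i → Wc i = ⊤) ∧ Wc 1 = W
        ∧ (∀ i, i < m → Wc i ≤ Wc (i + 1))
        ∧ (∀ i, i ≤ m → Module.finrank F (Wc i) = r i)
        ∧ (∀ i, i < m → Submodule.map x (Wc (i + 1)) ≤ Wc i)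
        ∧ v ∈ Wc j}
      {U : ℕ → Submodule F (V ⧸ W) |
        U 0 = ⊥ ∧ (∀ i, m - 1 ≤ i → U i = ⊤)
        ∧ (∀ i, i < m - 1 → U i ≤ U (i + 1))
        ∧ (∀ i, i ≤ m - 1 → Module.finrank F (U i) = r (i + 1) - r 1)
        ∧ (∀ i, i < m - 1 → Submodule.map xbar (U (i + 1)) ≤ U i)
        ∧ Submodule.Quotient.mk v ∈ U (j - 1)} := by

  classical
  have hcomm : (xbar ∘ₗ W.mkQ) = (W.mkQ ∘ₗ x) := LinearMap.ext fun u => by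
    simpa [Submodule.mkQ_apply] using hxbar u
  have hmapcomm : ∀ S : Submodule F V, Submodule.map xbar (Submodule.map W.mkQ S)
      = Submodule.map W.mkQ (Submodule.map x S) := by
    intro S
    rw [← Submodule.map_comp, ← Submodule.map_comp, hcomm]
  have hrank : ∀ S : Submodule F V, W ≤ S →
      Module.finrank F (Submodule.map W.mkQ S) + Module.finrank F W = Module.finrank F S := by
    intro S hWS
    have h1 := LinearMap.finrank_range_add_finrank_ker (W.mkQ ∘ₗ S.subtype)
    rw [LinearMap.range_comp, Submodule.range_subtype, LinearMap.ker_comp,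
      Submodule.ker_mkQ] at h1
    rwa [(Submodule.comapSubtypeEquivOfLe hWS).finrank_eq] at h1
  have hrmono : ∀ k, k ≤ m → ∀ i, i ≤ k → r i ≤ r k := by
    intro k
    induction k with
    | zero => intro _ i hi; obtain rfl := Nat.le_zero.mp hi; exact le_rfl
    | succ k ih =>
      intro hk i hi
      rcases Nat.eq_or_lt_of_le hi with h | h
      · exact h ▸ le_rfl
      · exact le_of_lt (lt_of_le_of_lt (ih (by omega) i (by omega)) (hr k (by omega)))
  have hWleGen : ∀ Wc : ℕ → Submodule F V, Wc 1 = W → (∀ i, i < m → Wc i ≤ Wc (i+1)) →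
      (∀ i, m ≤ i → Wc i = ⊤) → ∀ i, 1 ≤ i → W ≤ Wc i := by
    intro Wc h1 hle htop i hi
    induction i, hi using Nat.le_induction with
    | base => exact h1.ge
    | succ k hk ih =>
      by_cases h : k < m
      · exact ih.trans (hle k h)
      · rw [htop (k+1) (by omega)]; exact le_top
  refine ⟨?_, ?_, ?_⟩
  · -- MapsTo
    rintro Wc ⟨h0, htop, h1, hle, hdim, hx, hv⟩
    have hWle := hWleGen Wc h1 hle htop
    refine ⟨?_, ?_, ?_, ?_, ?_, ?_⟩
    · show Submodule.map W.mkQ (Wc 1) = ⊥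
      rw [h1]
      exact le_bot_iff.mp (Submodule.map_le_iff_le_comap.mpr
        (by rw [Submodule.comap_bot, Submodule.ker_mkQ]))
    · intro i hi
      show Submodule.map W.mkQ (Wc (i+1)) = ⊤
      rw [htop (i+1) (by omega), Submodule.map_top, Submodule.range_mkQ]
    · intro i hi
      exact Submodule.map_mono (hle (i+1) (by omega))
    · intro i hi
      show Module.finrank F (Submodule.map W.mkQ (Wc (i+1))) = r (i+1) - r 1
      have h := hrank (Wc (i+1)) (hWle (i+1) (by omega))
      rw [hdim (i+1) (by omega), hWdim] at h
      have := hrmono (i+1) (by omega) 1 (by omega)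
      omega
    · intro i hi
      show Submodule.map xbar (Submodule.map W.mkQ (Wc (i+2))) ≤ _
      rw [hmapcomm]
      exact Submodule.map_mono (hx (i+1) (by omega))
    · show Submodule.Quotient.mk v ∈ Submodule.map W.mkQ (Wc (j-1+1))
      have hjj : j - 1 + 1 = j := by omega
      rw [hjj]
      exact ⟨v, hv, rfl⟩
  · -- InjOn
    rintro Wc ⟨h0, htop, h1, hle, -, -, -⟩ Wc' ⟨h0', htop', h1', hle', -, -, -⟩ heq
    have hWle := hWleGen Wc h1 hle htop
    have hWle' := hWleGen Wc' h1' hle' htop'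
    funext i
    match i with
    | 0 => rw [h0, h0']
    | (k+1) =>
      have e1 : W ⊔ Wc (k+1) = W ⊔ Wc' (k+1) := by
        rw [← Submodule.comap_map_mkQ, ← Submodule.comap_map_mkQ]
        exact congrArg (Submodule.comap W.mkQ) (congrFun heq k)
      rwa [sup_eq_right.mpr (hWle (k+1) (by omega)),
        sup_eq_right.mpr (hWle' (k+1) (by omega))] at e1
  · -- SurjOn
    rintro U ⟨h0, htop, hle, hdim, hx, hv⟩
    have hWcomap : ∀ S : Submodule F (V ⧸ W), W ≤ Submodule.comap W.mkQ S := by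
      intro S
      have h2 : Submodule.comap W.mkQ (⊥ : Submodule F (V ⧸ W)) ≤ Submodule.comap W.mkQ S :=
        Submodule.comap_mono bot_le
      rwa [Submodule.comap_bot, Submodule.ker_mkQ] at h2
    have hmapcomap : ∀ S : Submodule F (V ⧸ W),
        Submodule.map W.mkQ (Submodule.comap W.mkQ S) = S := by
      intro S
      rw [Submodule.map_comap_eq, Submodule.range_mkQ, top_inf_eq]
    let Wc : ℕ → Submodule F V := fun i => match i with
      | 0 => ⊥
      | (k+1) => Submodule.comap W.mkQ (U k)
    refine ⟨Wc, ⟨?_, ?_, ?_, ?_, ?_, ?_, ?_⟩, ?_⟩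
    · rfl
    · intro i hi
      obtain ⟨k, rfl⟩ : ∃ k, i = k + 1 := ⟨i - 1, by omega⟩
      show Submodule.comap W.mkQ (U k) = ⊤
      rw [htop k (by omega), Submodule.comap_top]
    · show Submodule.comap W.mkQ (U 0) = W
      rw [h0, Submodule.comap_bot, Submodule.ker_mkQ]
    · intro i hi
      match i with
      | 0 => exact bot_le
      | (k+1) =>
        exact Submodule.comap_mono (hle k (by omega))
    · intro i hi
      match i with
      | 0 =>
        show Module.finrank F (⊥ : Submodule F V) = r 0
        rw [hr0]; exact finrank_bot F V
      | (k+1) =>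
        show Module.finrank F (Submodule.comap W.mkQ (U k)) = r (k+1)
        have h := hrank (Submodule.comap W.mkQ (U k)) (hWcomap (U k))
        rw [hmapcomap] at h
        rw [hdim k (by omega), hWdim] at h
        have := hrmono (k+1) (by omega) 1 (by omega)
        omega
    · intro i hi
      match i with
      | 0 =>
        show Submodule.map x (Submodule.comap W.mkQ (U 0)) ≤ ⊥
        rw [h0, Submodule.comap_bot, Submodule.ker_mkQ]
        rintro _ ⟨w, hw, rfl⟩
        simp [LinearMap.mem_ker.mp (hWker hw)]
      | (k+1) =>
        show Submodule.map x (Submodule.comap W.mkQ (U (k+1))) ≤ Submodule.comap W.mkQ (U k)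
        rintro _ ⟨u, hu, rfl⟩
        show W.mkQ (x u) ∈ U k
        refine hx k (by omega) ⟨W.mkQ u, hu, ?_⟩
        rw [Submodule.mkQ_apply, Submodule.mkQ_apply, hxbar]
    · obtain ⟨k, rfl⟩ : ∃ k, j = k + 1 := ⟨j - 1, by omega⟩
      show v ∈ Submodule.comap W.mkQ (U k)
      show W.mkQ v ∈ U k
      rw [Submodule.mkQ_apply]
      simp only [Nat.add_sub_cancel] at hv
      exact hv
    · funext i
      exact hmapcomap (U i)
end
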